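/- Let γ, η > 0 and c ∈ (0,1), and let F^{planch}(z) = 1F1(γ; z; -η)/Γ(z) = (1/Γ(z)) sum_{n>=0} (γ^{↑n}/z^{↑n}) (-η)^n/n!. Then F^{planch} extends to an entire function of z of finite order: there exist constants A, r > 0 such that |F^{planch}(z)| <= exp(|z|^A) for all |z| > r. -/

import Mathlib

/-- The complex rising factorial `g^{↑n} = g(g+1)⋯(g+n-1)`. -/
noncomputable def risingC (g : ℂ) (n : ℕ) : ℂ :=
  ∏ i ∈ Finset.range n, (g + i)

open Complex Finset

open Complex Finset

/-- Bound on `|Γ(s)|` by the real Gamma of the real part. -/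
lemma abs_Gamma_le_real {s : ℂ} (hs : 0 < s.re) :
    ‖(Complex.Gamma s)‖ ≤ Real.Gamma s.re := by
  rw [Complex.Gamma_eq_integral hs, Real.Gamma_eq_integral hs]
  calc ‖(Complex.GammaIntegral s)‖
      ≤ ∫ x in Set.Ioi (0:ℝ), ‖(↑(Real.exp (-x)) * (x:ℂ) ^ (s - 1) : ℂ)‖ := by
        rw [Complex.GammaIntegral]
        exact MeasureTheory.norm_integral_le_integral_norm _
    _ = ∫ x in Set.Ioi (0:ℝ), Real.exp (-x) * x ^ (s.re - 1) := by
        refine MeasureTheory.setIntegral_congr_fun measurableSet_Ioi fun x hx => ?_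
        have hx' : (0:ℝ) < x := hx
        rw [norm_mul, Complex.norm_real, Real.norm_eq_abs,
          _root_.abs_of_nonneg (Real.exp_nonneg _), Complex.norm_cpow_eq_rpow_re_of_pos hx']
        simp [Complex.sub_re]

/-- Bound on `|Γ(s)|` on the strip `1/2 ≤ re s ≤ 2`. -/
lemma strip_bound : ∃ M : ℝ, 1 ≤ M ∧ ∀ s : ℂ, 1/2 ≤ s.re → s.re ≤ 2 →
    ‖(Complex.Gamma s)‖ ≤ M := by
  have hcont : ContinuousOn Real.Gamma (Set.Icc (1/2:ℝ) 2) := by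
    intro x hx
    have hx0 : (0:ℝ) < x := lt_of_lt_of_le (by norm_num) hx.1
    refine (Real.differentiableAt_Gamma ?_).continuousAt.continuousWithinAt
    intro m hm
    rw [hm] at hx0
    have := Nat.cast_nonneg (α := ℝ) m
    linarith
  obtain ⟨x₀, _, hx₀⟩ := isCompact_Icc.exists_isMaxOn ⟨1, by norm_num⟩ hcont
  refine ⟨max 1 (Real.Gamma x₀), le_max_left _ _, fun s h1 h2 => ?_⟩
  calc ‖(Complex.Gamma s)‖ ≤ Real.Gamma s.re :=
        abs_Gamma_le_real (lt_of_lt_of_le (by norm_num) h1)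
    _ ≤ Real.Gamma x₀ := hx₀ ⟨h1, h2⟩
    _ ≤ _ := le_max_right _ _

/-- `Γ(s + m) = Γ(s) ∏_{j<m} (s + j)` when no factor vanishes. -/
lemma Gamma_add_nat (s : ℂ) (m : ℕ) (h : ∀ j : ℕ, j < m → s + j ≠ 0) :
    Complex.Gamma (s + m) = Complex.Gamma s * ∏ j ∈ range m, (s + j) := by
  induction m with
  | zero => simp
  | succ m ih =>
    have h1 : s + m ≠ 0 := h m (Nat.lt_succ_self m)
    have hcast : s + ((m+1 : ℕ) : ℂ) = (s + m) + 1 := by push_cast; ring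
    rw [hcast, Complex.Gamma_add_one _ h1, ih (fun j hj => h j (hj.trans (Nat.lt_succ_self m))),
      prod_range_succ]
    ring


-- assume part1 lemmas

/-- Bound on `|Γ|` in the half plane `re s ≥ 1/2`. -/
lemma half_plane_bound : ∃ M : ℝ, 1 ≤ M ∧ ∀ s : ℂ, 1/2 ≤ s.re →
    ‖(Complex.Gamma s)‖ ≤ M * Real.exp (‖s‖ ^ 2) := by
  obtain ⟨M, hM1, hM⟩ := strip_bound
  have key : ∀ n : ℕ, ∀ s : ℂ, 1/2 ≤ s.re → s.re ≤ n + 2 →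
      ‖(Complex.Gamma s)‖ ≤ M * (‖s‖ + 1) ^ n := by
    intro n
    induction n with
    | zero => intro s h1 h2; simpa using hM s h1 (by exact_mod_cast h2)
    | succ n ih =>
      intro s h1 h2
      have hone : (1:ℝ) ≤ ‖s‖ + 1 := by
        have := norm_nonneg s; linarith
      by_cases hc : s.re ≤ n + 2
      · calc ‖(Complex.Gamma s)‖ ≤ M * (‖s‖ + 1) ^ n := ih s h1 hc
          _ ≤ M * (‖s‖ + 1) ^ (n+1) := by
            exact mul_le_mul_of_nonneg_left (pow_le_pow_right₀ hone (Nat.le_succ n)) (by linarith)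
      · push_neg at hc
        have hre : (1:ℝ) ≤ s.re := by push_cast at hc ⊢; linarith [Nat.cast_nonneg (α := ℝ) n]
        have hs1 : s - 1 ≠ 0 := by
          intro h
          have : s = 1 := by rwa [sub_eq_zero] at h
          rw [this] at hc; simp at hc
          linarith [Nat.cast_nonneg (α := ℝ) n]
        have hgam : Complex.Gamma s = (s - 1) * Complex.Gamma (s - 1) := by
          have := Complex.Gamma_add_one (s - 1) hs1
          rwa [sub_add_cancel] at this
        have habs : ‖(s - 1)‖ ≤ ‖s‖ := by
          have h1' : ‖(s-1)‖^2 ≤ ‖s‖^2 := by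
            rw [Complex.sq_norm, Complex.sq_norm, Complex.normSq_apply, Complex.normSq_apply,
              Complex.sub_re, Complex.sub_im, Complex.one_re, Complex.one_im]
            nlinarith
          have := norm_nonneg (s-1)
          nlinarith [norm_nonneg s]
        have hih := ih (s - 1) (by rw [Complex.sub_re, Complex.one_re]; linarith)
          (by rw [Complex.sub_re, Complex.one_re]; push_cast; push_cast at h2; linarith)
        calc ‖(Complex.Gamma s)‖
            = ‖(s-1)‖ * ‖(Complex.Gamma (s-1))‖ := by rw [hgam, norm_mul]
          _ ≤ (‖s‖ + 1) * (M * (‖(s-1)‖ + 1) ^ n) := by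
              apply mul_le_mul (by linarith) hih (norm_nonneg _) (by linarith)
          _ ≤ (‖s‖ + 1) * (M * (‖s‖ + 1) ^ n) := by
              have h3 : (‖(s-1)‖ + 1) ^ n ≤ (‖s‖ + 1) ^ n :=
                pow_le_pow_left₀ (by positivity) (by linarith) n
              exact mul_le_mul_of_nonneg_left
                (mul_le_mul_of_nonneg_left h3 (by linarith)) (by positivity)
          _ = M * (‖s‖ + 1) ^ (n+1) := by ring
  refine ⟨M, hM1, fun s h1 => ?_⟩
  have h0 : (0:ℝ) ≤ ‖s‖ := norm_nonneg s
  have hre : s.re ≤ ‖s‖ := Complex.re_le_norm s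
  have hn := key ⌊‖s‖⌋₊ s h1 (by
    have := Nat.lt_floor_add_one (‖s‖)
    push_cast; linarith)
  refine hn.trans ?_
  have hb : (‖s‖ + 1) ^ (⌊‖s‖⌋₊ : ℕ) ≤ Real.exp (‖s‖ ^ 2) := by
    calc (‖s‖ + 1) ^ (⌊‖s‖⌋₊ : ℕ)
        ≤ (Real.exp (‖s‖)) ^ (⌊‖s‖⌋₊ : ℕ) := by
          apply pow_le_pow_left₀ (by linarith) (by linarith [Real.add_one_le_exp (‖s‖)])
      _ = Real.exp ((⌊‖s‖⌋₊ : ℕ) * ‖s‖) := by rw [← Real.exp_nat_mul]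
      _ ≤ Real.exp (‖s‖ ^ 2) := by
          apply Real.exp_le_exp.2
          have := Nat.floor_le h0
          nlinarith
  nlinarith [Real.exp_pos (‖s‖ ^ 2), pow_nonneg (by linarith : (0:ℝ) ≤ ‖s‖ + 1) ⌊‖s‖⌋₊]

lemma abs_sin_le (ζ : ℂ) : ‖(Complex.sin ζ)‖ ≤ Real.exp (‖ζ‖) := by
  rw [Complex.sin]
  have h1 : ∀ w : ℂ, ‖w‖ ≤ ‖ζ‖ → ‖(Complex.exp w)‖ ≤ Real.exp (‖ζ‖) := by
    intro w hw
    rw [Complex.norm_exp]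
    apply Real.exp_le_exp.2
    calc w.re ≤ |w.re| := le_abs_self _
      _ ≤ ‖w‖ := Complex.abs_re_le_norm w
      _ ≤ _ := hw
  have e1 := h1 (-ζ * Complex.I) (by simp)
  have e2 := h1 (ζ * Complex.I) (by simp)
  calc ‖((Complex.exp (-ζ * Complex.I) - Complex.exp (ζ * Complex.I)) * Complex.I / 2)‖
      = ‖(Complex.exp (-ζ * Complex.I) - Complex.exp (ζ * Complex.I))‖ / 2 := by
        rw [norm_div, norm_mul]; simp
    _ ≤ (‖(Complex.exp (-ζ * Complex.I))‖ + ‖(Complex.exp (ζ * Complex.I))‖) / 2 := by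
        have := norm_sub_le (Complex.exp (-ζ * Complex.I)) (Complex.exp (ζ * Complex.I))
        linarith
    _ ≤ _ := by linarith

/-- Global bound for `|1/Γ|`. -/
lemma inv_Gamma_bound : ∃ K : ℝ, 1 ≤ K ∧ ∀ w : ℂ,
    ‖(Complex.Gamma w)⁻¹‖ ≤ K * Real.exp ((‖w‖ + 5) ^ 2) := by
  obtain ⟨M, hM1, hM⟩ := half_plane_bound
  obtain ⟨w₂, _, hw₂⟩ := (isCompact_closedBall (1:ℂ) (1/2)).exists_isMaxOn
    ⟨1, by simp⟩
    ((continuous_norm.comp Complex.differentiable_one_div_Gamma.continuous).continuousOn)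
  set M₂ : ℝ := ‖(Complex.Gamma w₂)⁻¹‖ with hM₂def
  have hM₂0 : 0 ≤ M₂ := norm_nonneg _
  refine ⟨M + M₂ + 1, by linarith, fun w => ?_⟩
  have habs0 : (0:ℝ) ≤ ‖w‖ := norm_nonneg w
  have hexp1 : (1:ℝ) ≤ Real.exp ((‖w‖ + 5) ^ 2) := by
    rw [← Real.exp_zero]; apply Real.exp_le_exp.2; positivity
  by_cases hB : ∃ m : ℕ, 1 ≤ m ∧ ‖(w - m)‖ < 1/2
  · -- near a positive integer
    obtain ⟨m, hm1, hmw⟩ := hB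
    set u : ℂ := w - m with hu
    have hulow : ∀ j : ℕ, (1:ℝ)/2 ≤ ‖(1 + u + j)‖ := by
      intro j
      have hj1 : (1:ℝ) ≤ ‖((1:ℂ) + j)‖ := by
        rw [show ((1:ℂ) + j) = ((1 + j : ℕ) : ℂ) by push_cast; ring, Complex.norm_natCast]
        exact_mod_cast Nat.le_add_right 1 j
      have h2 : ‖((1:ℂ) + j)‖ ≤ ‖(1 + u + j)‖ + ‖u‖ := by
        calc ‖((1:ℂ) + j)‖ = ‖((1 + u + j) + (-u))‖ := by ring_nf
          _ ≤ _ := by simpa using norm_add_le (1 + u + j) (-u)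
      have h3 : ‖u‖ < 1/2 := hmw
      linarith
    have hprod := Gamma_add_nat (1 + u) (m - 1) (fun j _ => by
      intro h0
      have := hulow j
      rw [h0, norm_zero] at this
      norm_num at this)
    have hcast : (1 + u) + ((m - 1 : ℕ) : ℂ) = w := by
      have : ((m - 1 : ℕ) : ℂ) = (m : ℂ) - 1 := by
        have := Nat.cast_sub (R := ℂ) hm1
        simpa using this
      rw [this, hu]; ring
    rw [hcast] at hprod
    have hGu : ‖(Complex.Gamma (1 + u))⁻¹‖ ≤ M₂ := by
      apply hw₂
      simp only [Metric.mem_closedBall]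
      rw [Complex.dist_eq, show (1 + u) - 1 = u by ring]
      exact le_of_lt hmw
    have hPinv : ‖(∏ j ∈ Finset.range (m-1), (1 + u + j))⁻¹‖ ≤ 2 ^ (m-1) := by
      rw [← Finset.prod_inv_distrib, norm_prod]
      calc ∏ j ∈ Finset.range (m-1), ‖(1 + u + j)⁻¹‖
          ≤ ∏ _j ∈ Finset.range (m-1), (2:ℝ) := by
            apply Finset.prod_le_prod (fun j _ => norm_nonneg _)
            intro j _
            rw [norm_inv, inv_le_comm₀ (by linarith [hulow j]) (by norm_num)]
            linarith [hulow j]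
        _ = 2 ^ (m-1) := by rw [Finset.prod_const, Finset.card_range]
    have hm_le : (m : ℝ) ≤ ‖w‖ + 1 := by
      have h5 : (m:ℝ) = ‖(m : ℂ)‖ := by rw [Complex.norm_natCast]
      rw [h5]
      calc ‖(m:ℂ)‖ = ‖(w - (w - m))‖ := by ring_nf
        _ ≤ ‖w‖ + ‖(w - m)‖ := by
            simpa using norm_sub_le w (w - m)
        _ ≤ _ := by linarith [hmw.le]
    have h2pow : (2:ℝ) ^ (m-1) ≤ Real.exp ((‖w‖ + 5)^2) := by
      calc (2:ℝ) ^ (m-1) ≤ (Real.exp 1) ^ (m-1) := by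
            apply pow_le_pow_left₀ (by norm_num)
            have := Real.add_one_le_exp (1:ℝ); linarith
        _ = Real.exp ((m-1 : ℕ)) := by rw [← Real.exp_nat_mul]; ring_nf
        _ ≤ _ := by
            apply Real.exp_le_exp.2
            have : ((m-1:ℕ):ℝ) ≤ (m:ℝ) := by exact_mod_cast Nat.sub_le m 1
            nlinarith
    calc ‖(Complex.Gamma w)⁻¹‖
        = ‖(Complex.Gamma (1+u))⁻¹‖ * ‖(∏ j ∈ Finset.range (m-1), (1 + u + j))⁻¹‖ := by
          rw [hprod, mul_inv, norm_mul]
      _ ≤ M₂ * Real.exp ((‖w‖ + 5)^2) := by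
          apply mul_le_mul hGu (hPinv.trans h2pow) (norm_nonneg _) hM₂0
      _ ≤ _ := by nlinarith
  · by_cases hC : ∃ k : ℕ, w = -k
    · obtain ⟨k, rfl⟩ := hC
      rw [(Complex.Gamma_eq_zero_iff _).2 ⟨k, rfl⟩]
      simp only [inv_zero, norm_zero]
      positivity
    · -- reflection formula case
      push_neg at hC
      have hBge : ∀ m : ℕ, 1 ≤ m → 1/2 ≤ ‖(w - m)‖ := by
        intro m hm
        by_contra h
        exact hB ⟨m, hm, not_le.1 h⟩
      have hπpos := Real.pi_pos
      have hπ4 : Real.pi ≤ 4 := by linarith [Real.pi_le_four]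
      have hsin : Complex.sin (↑Real.pi * w) ≠ 0 := by
        rw [Ne, Complex.sin_eq_zero_iff]
        rintro ⟨k, hk⟩
        have hπ : (Real.pi : ℂ) ≠ 0 := Complex.ofReal_ne_zero.2 Real.pi_ne_zero
        have hwk : w = k := by
          rw [mul_comm] at hk
          exact mul_right_cancel₀ hπ hk
        rcases le_or_gt k 0 with hk0 | hk0
        · obtain ⟨n, rfl⟩ := Int.exists_eq_neg_ofNat hk0
          exact hC n (by rw [hwk]; push_cast; ring)
        · obtain ⟨n, rfl⟩ := Int.eq_ofNat_of_zero_le hk0.le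
          have hn1 : 1 ≤ n := by exact_mod_cast hk0
          have := hBge n hn1
          rw [hwk] at this
          push_cast at this
          simp at this
          linarith
      have href := Complex.Gamma_mul_Gamma_one_sub w
      have hπC : (Real.pi : ℂ) ≠ 0 := Complex.ofReal_ne_zero.2 Real.pi_ne_zero
      have hΓw : Complex.Gamma w ≠ 0 := by
        intro h0
        rw [h0, zero_mul] at href
        have : (Real.pi : ℂ) = 0 := by
          rw [eq_comm, div_eq_iff hsin] at href
          simpa using href
        exact hπC this
      have hinv : (Complex.Gamma w)⁻¹ = Complex.Gamma (1 - w) * Complex.sin (Real.pi * w) / Real.pi := by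
        rw [eq_div_iff hπC]
        field_simp [hsin] at href
        have : Complex.Gamma w * (Complex.Gamma (1 - w) * Complex.sin (Real.pi * w)) = Complex.Gamma w * (Real.pi / Complex.Gamma w) := by
          rw [← mul_assoc, href]
          field_simp
        have h7 := mul_left_cancel₀ hΓw this
        rw [h7]
        field_simp
      -- bound |Γ(1-w)|
      have hGbound : ‖(Complex.Gamma (1 - w))‖ ≤
          M * Real.exp ((‖w‖ + 2)^2 + (‖w‖ + 1)) := by
        have hexpmono : Real.exp ((‖w‖ + 2)^2) ≤ Real.exp ((‖w‖ + 2)^2 + (‖w‖ + 1)) := by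
          apply Real.exp_le_exp.2; linarith
        by_cases hre : 1/2 ≤ (1 - w).re
        · calc ‖(Complex.Gamma (1 - w))‖ ≤ M * Real.exp (‖(1-w)‖^2) := hM _ hre
            _ ≤ _ := by
              apply mul_le_mul_of_nonneg_left _ (by linarith)
              refine le_trans ?_ hexpmono
              apply Real.exp_le_exp.2
              have h1w : ‖(1 - w)‖ ≤ ‖w‖ + 1 := by
                calc ‖(1 - w)‖ ≤ ‖(1:ℂ)‖ + ‖w‖ := by
                      simpa using norm_sub_le (1:ℂ) w
                  _ = ‖w‖ + 1 := by simp [add_comm]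
              nlinarith [norm_nonneg (1-w)]
        · push_neg at hre
          rw [Complex.sub_re, Complex.one_re] at hre
          set m : ℕ := ⌈1/2 - (1 - w.re)⌉₊ with hmdef
          have hmge : 1/2 - (1 - w.re) ≤ m := Nat.le_ceil _
          have hmlt : (m:ℝ) < 1/2 - (1 - w.re) + 1 := Nat.ceil_lt_add_one (by linarith)
          have hlow : ∀ j : ℕ, (1:ℝ)/2 ≤ ‖((1 - w) + j)‖ := by
            intro j
            have := hBge (1+j) (Nat.le_add_right 1 j)
            rw [show ((1+j:ℕ):ℂ) = 1 + j by push_cast; ring] at this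
            rw [show (1 - w) + j = -(w - (1 + j)) by ring, norm_neg]
            linarith
          have hne : ∀ j : ℕ, j < m → (1 - w) + j ≠ 0 := by
            intro j _ h0
            have := hlow j
            rw [h0, norm_zero] at this
            norm_num at this
          have hprod := Gamma_add_nat (1 - w) m hne
          have hprodlow : ((1:ℝ)/2) ^ m ≤ ‖(∏ j ∈ Finset.range m, ((1 - w) + j))‖ := by
            rw [norm_prod]
            calc ((1:ℝ)/2)^m = ∏ _x ∈ Finset.range m, ((1:ℝ)/2) := by
                  rw [Finset.prod_const, Finset.card_range]
              _ ≤ _ := Finset.prod_le_prod (fun j _ => by norm_num) (fun j _ => hlow j)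
          have hstrip : ‖(Complex.Gamma ((1 - w) + m))‖ ≤ M * Real.exp ((‖w‖ + 2)^2) := by
            have hre2 : 1/2 ≤ ((1 - w) + m).re := by
              simp only [Complex.add_re, Complex.natCast_re, Complex.sub_re, Complex.one_re]
              linarith
            calc ‖(Complex.Gamma ((1 - w) + m))‖ ≤ M * Real.exp (‖((1-w)+m)‖^2) := hM _ hre2
              _ ≤ _ := by
                apply mul_le_mul_of_nonneg_left _ (by linarith)
                apply Real.exp_le_exp.2
                have habs2 : ‖((1-w)+m)‖ ≤ ‖w‖ + 2 := by
                  have him : ((1-w)+m).im = -w.im := by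
                    simp [Complex.sub_im, Complex.add_im]
                  have hre3 : ((1-w)+m).re = 1 - w.re + m := by
                    simp [Complex.sub_re, Complex.add_re]
                  have h4 : |((1-w)+m).re| ≤ 2 := by
                    rw [hre3, abs_le]; constructor <;> linarith
                  have h5 : |((1-w)+m).im| ≤ ‖w‖ := by
                    rw [him, abs_neg]; exact Complex.abs_im_le_norm w
                  calc ‖((1-w)+m)‖ ≤ |((1-w)+m).re| + |((1-w)+m).im| :=
                        Complex.norm_le_abs_re_add_abs_im _
                    _ ≤ ‖w‖ + 2 := by linarith
                nlinarith [norm_nonneg ((1-w)+m)]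
          have hmw2 : (m:ℝ) ≤ ‖w‖ + 1 := by
            have := Complex.re_le_norm w
            linarith
          have h2powm : (2:ℝ) ^ m ≤ Real.exp (‖w‖ + 1) := by
            calc (2:ℝ) ^ m ≤ (Real.exp 1) ^ m := by
                  apply pow_le_pow_left₀ (by norm_num)
                  have := Real.add_one_le_exp (1:ℝ); linarith
              _ = Real.exp m := by rw [← Real.exp_nat_mul]; ring_nf
              _ ≤ _ := Real.exp_le_exp.2 hmw2
          have hkey : ‖(Complex.Gamma (1 - w))‖ * ((1:ℝ)/2)^m ≤ M * Real.exp ((‖w‖ + 2)^2) := by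
            calc ‖(Complex.Gamma (1 - w))‖ * ((1:ℝ)/2)^m
                ≤ ‖(Complex.Gamma (1 - w))‖ * ‖(∏ j ∈ Finset.range m, ((1 - w) + j))‖ :=
                  mul_le_mul_of_nonneg_left hprodlow (norm_nonneg _)
              _ = ‖(Complex.Gamma ((1 - w) + m))‖ := by rw [hprod, norm_mul]
              _ ≤ _ := hstrip
          calc ‖(Complex.Gamma (1 - w))‖
              = ‖(Complex.Gamma (1 - w))‖ * ((1:ℝ)/2)^m * 2^m := by
                have h2m : ((1:ℝ)/2)^m * (2:ℝ)^m = 1 := by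
                  rw [div_pow, one_pow]; field_simp
                rw [mul_assoc, h2m, mul_one]
            _ ≤ (M * Real.exp ((‖w‖ + 2)^2)) * Real.exp (‖w‖ + 1) := by
                apply mul_le_mul hkey h2powm (by positivity) (by positivity)
            _ = _ := by rw [mul_assoc, ← Real.exp_add]
      -- assemble
      have hsinb : ‖(Complex.sin (Real.pi * w))‖ ≤ Real.exp (4 * ‖w‖) := by
        refine (abs_sin_le _).trans ?_
        apply Real.exp_le_exp.2
        rw [norm_mul, Complex.norm_real, Real.norm_eq_abs, _root_.abs_of_pos hπpos]
        nlinarith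
      rw [hinv]
      rw [norm_div, norm_mul]
      have hπabs : ‖(Real.pi : ℂ)‖ = Real.pi := by
        rw [Complex.norm_real, Real.norm_eq_abs, _root_.abs_of_pos hπpos]
      rw [hπabs]
      have hnum : ‖(Complex.Gamma (1 - w))‖ * ‖(Complex.sin (Real.pi * w))‖ ≤
          M * Real.exp ((‖w‖ + 2)^2 + (‖w‖ + 1)) * Real.exp (4 * ‖w‖) :=
        mul_le_mul hGbound hsinb (norm_nonneg _) (by positivity)
      have hfin : M * Real.exp ((‖w‖ + 2)^2 + (‖w‖ + 1)) * Real.exp (4 * ‖w‖) ≤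
          (M + M₂ + 1) * Real.exp ((‖w‖ + 5)^2) := by
        rw [mul_assoc, ← Real.exp_add]
        have : Real.exp ((‖w‖ + 2)^2 + (‖w‖ + 1) + 4 * ‖w‖) ≤
            Real.exp ((‖w‖ + 5)^2) := by
          apply Real.exp_le_exp.2
          nlinarith
        nlinarith [Real.exp_pos ((‖w‖ + 2)^2 + (‖w‖ + 1) + 4 * ‖w‖)]
      calc ‖(Complex.Gamma (1 - w))‖ * ‖(Complex.sin (Real.pi * w))‖ / Real.pi
          ≤ ‖(Complex.Gamma (1 - w))‖ * ‖(Complex.sin (Real.pi * w))‖ := by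
            apply div_le_self (by positivity) (by linarith [Real.pi_gt_three])
        _ ≤ _ := hnum.trans hfin

/-- descending recursion for `1/Γ` along a ray. -/
lemma inv_Gamma_step (z : ℂ) (N : ℕ) (hN : 1 ≤ N)
    (h : ∀ k : ℕ, N ≤ k → (k : ℝ) ≤ 2 * ‖(z + k)‖) :
    ∀ m : ℕ, ‖(Complex.Gamma (z + ((N + m : ℕ) : ℂ)))⁻¹‖ *
      ∏ j ∈ Finset.range m, (((N + j : ℕ) : ℝ) / 2) ≤
      ‖(Complex.Gamma (z + (N : ℂ)))⁻¹‖ := by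
  intro m
  induction m with
  | zero => simp
  | succ m ih =>
    have hk := h (N + m) (Nat.le_add_right N m)
    have hwpos : (0:ℝ) < ‖(z + ((N+m:ℕ):ℂ))‖ := by
      have h1 : (1:ℝ) ≤ ((N+m:ℕ):ℝ) := by exact_mod_cast Nat.le_add_right_of_le hN
      push_cast at hk h1 ⊢
      linarith
    have hwne : z + ((N+m:ℕ):ℂ) ≠ 0 := by
      intro h0; rw [h0, norm_zero] at hwpos; exact lt_irrefl _ hwpos
    have hgam : Complex.Gamma (z + ((N + (m+1) : ℕ) : ℂ)) =
        (z + ((N+m:ℕ):ℂ)) * Complex.Gamma (z + ((N+m:ℕ):ℂ)) := by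
      have hc : z + ((N + (m+1) : ℕ) : ℂ) = (z + ((N+m:ℕ):ℂ)) + 1 := by push_cast; ring
      rw [hc, Complex.Gamma_add_one _ hwne]
    have hkey : ‖(z + ((N+m:ℕ):ℂ))⁻¹‖ * (((N + m : ℕ) : ℝ) / 2) ≤ 1 := by
      rw [norm_inv, inv_mul_le_iff₀ hwpos, mul_one]
      push_cast at hk ⊢
      linarith
    have hP : (0:ℝ) ≤ ∏ j ∈ Finset.range m, (((N + j : ℕ) : ℝ) / 2) :=
      Finset.prod_nonneg (fun j _ => by positivity)
    calc ‖(Complex.Gamma (z + ((N + (m+1) : ℕ) : ℂ)))⁻¹‖ *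
        ∏ j ∈ Finset.range (m+1), (((N + j : ℕ) : ℝ) / 2)
        = (‖(z + ((N+m:ℕ):ℂ))⁻¹‖ * (((N + m : ℕ) : ℝ) / 2)) *
          (‖(Complex.Gamma (z + ((N+m:ℕ):ℂ)))⁻¹‖ *
            ∏ j ∈ Finset.range m, (((N + j : ℕ) : ℝ) / 2)) := by
          rw [Finset.prod_range_succ, hgam, mul_inv, norm_mul]
          ring
      _ ≤ 1 * (‖(Complex.Gamma (z + ((N+m:ℕ):ℂ)))⁻¹‖ *
            ∏ j ∈ Finset.range m, (((N + j : ℕ) : ℝ) / 2)) := by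
          apply mul_le_mul_of_nonneg_right hkey
          positivity
      _ = _ := by rw [one_mul]
      _ ≤ _ := ih

/-- factorial identity -/
lemma fact_prod_id (N : ℕ) (hN : 1 ≤ N) : ∀ m : ℕ,
    ((N-1).factorial : ℝ) * ((N + m : ℕ) : ℝ) * ∏ j ∈ Finset.range m, ((N + j : ℕ) : ℝ) =
    ((N + m).factorial : ℝ) := by
  intro m
  induction m with
  | zero =>
    simp only [Finset.range_zero, Finset.prod_empty, mul_one, Nat.add_zero]
    rw [← Nat.cast_mul]
    congr 1
    obtain ⟨N', rfl⟩ := Nat.exists_eq_add_of_le hN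
    simp [Nat.factorial_succ, Nat.add_comm, mul_comm]
  | succ m ih =>
    rw [Finset.prod_range_succ, show N + (m+1) = (N+m) + 1 by ring, Nat.factorial_succ]
    push_cast
    push_cast at ih
    nlinarith [ih]

/-- The key uniform shifted bound. -/
lemma inv_Gamma_shift_bound : ∃ K : ℝ, 1 ≤ K ∧ ∀ (z : ℂ) (n : ℕ),
    ‖(Complex.Gamma (z + (n : ℂ)))⁻¹‖ ≤
      K * Real.exp ((5 * ‖z‖ + 12) ^ 2) * 2 ^ n * (n + 1) / n.factorial := by
  obtain ⟨K, hK1, hK⟩ := inv_Gamma_bound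
  refine ⟨K, hK1, fun z n => ?_⟩
  set R : ℝ := ‖z‖ with hRdef
  have hR0 : 0 ≤ R := norm_nonneg z
  set N : ℕ := ⌊2*R⌋₊ + 3 with hNdef
  have hN1 : 1 ≤ N := by omega
  have hNge : 2*R + 2 ≤ N := by
    have := Nat.lt_floor_add_one (2*R)
    rw [hNdef]
    push_cast
    linarith
  have hNle : (N:ℝ) ≤ 2*R + 3 := by
    have := Nat.floor_le (by linarith : (0:ℝ) ≤ 2*R)
    rw [hNdef]
    push_cast
    linarith
  -- factorials are at most exp((2R+2)^2) for arguments ≤ 2R+2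
  have hfact : ∀ k : ℕ, (k:ℝ) ≤ 2*R + 2 → (k.factorial : ℝ) ≤ Real.exp ((2*R+2)^2) := by
    intro k hk
    have hk0 : (0:ℝ) ≤ (k:ℝ) := Nat.cast_nonneg k
    calc (k.factorial : ℝ) ≤ (k:ℝ)^k := by exact_mod_cast Nat.factorial_le_pow k
      _ ≤ (Real.exp (2*R+2))^k := by
          apply pow_le_pow_left₀ hk0
          calc (k:ℝ) ≤ 2*R+2 := hk
            _ ≤ Real.exp (2*R+2) := by
                have := Real.add_one_le_exp (2*R+2); linarith
      _ = Real.exp (k * (2*R+2)) := by rw [← Real.exp_nat_mul]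
      _ ≤ Real.exp ((2*R+2)^2) := by
          apply Real.exp_le_exp.2
          nlinarith
  have hexp : Real.exp ((3*R+8)^2) * Real.exp ((2*R+2)^2) ≤ Real.exp ((5*R+12)^2) := by
    rw [← Real.exp_add]
    apply Real.exp_le_exp.2
    nlinarith
  have hE1 : (0:ℝ) < Real.exp ((5 * R + 12) ^ 2) := Real.exp_pos _
  have hsmall : ∀ k : ℕ, (k:ℝ) ≤ (N:ℝ) → ‖(Complex.Gamma (z + (k : ℂ)))⁻¹‖ ≤
      K * Real.exp ((3*R + 8)^2) := by
    intro k hkN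
    have habsk : ‖(z + k)‖ ≤ R + N := by
      calc ‖(z + k)‖ ≤ ‖z‖ + ‖(k:ℂ)‖ := norm_add_le _ _
        _ = R + k := by rw [Complex.norm_natCast]
        _ ≤ R + N := by linarith
    calc ‖(Complex.Gamma (z + (k:ℂ)))⁻¹‖
        ≤ K * Real.exp ((‖(z + k)‖ + 5)^2) := hK _
      _ ≤ K * Real.exp ((3*R + 8)^2) := by
          apply mul_le_mul_of_nonneg_left _ (by linarith)
          apply Real.exp_le_exp.2
          have h1 : ‖(z+k)‖ + 5 ≤ 3*R + 8 := by linarith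
          nlinarith [norm_nonneg (z + (k:ℂ))]
  by_cases hn : n < N
  · -- small n
    have hfn : (n.factorial : ℝ) ≤ Real.exp ((2*R+2)^2) := by
      apply hfact
      have h2 : (n:ℝ) + 1 ≤ (N:ℝ) := by exact_mod_cast hn
      linarith
    have hfpos : (0:ℝ) < (n.factorial : ℝ) := by exact_mod_cast Nat.factorial_pos n
    have h2n : (1:ℝ) ≤ 2^n * ((n:ℝ)+1) := by
      have h1 : (1:ℝ) ≤ 2^n := one_le_pow₀ (by norm_num)
      have h2 : (1:ℝ) ≤ (n:ℝ)+1 := by linarith [Nat.cast_nonneg (α := ℝ) n]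
      nlinarith
    calc ‖(Complex.Gamma (z + (n:ℂ)))⁻¹‖
        ≤ K * Real.exp ((3*R + 8)^2) := hsmall n (by exact_mod_cast hn.le)
      _ ≤ K * Real.exp ((5*R + 12)^2) / n.factorial := by
          rw [le_div_iff₀ hfpos]
          calc K * Real.exp ((3*R + 8)^2) * n.factorial
              ≤ K * Real.exp ((3*R + 8)^2) * Real.exp ((2*R+2)^2) := by
                apply mul_le_mul_of_nonneg_left hfn (by positivity)
            _ = K * (Real.exp ((3*R + 8)^2) * Real.exp ((2*R+2)^2)) := by ring
            _ ≤ K * Real.exp ((5*R + 12)^2) := mul_le_mul_of_nonneg_left hexp (by linarith)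
      _ ≤ K * Real.exp ((5 * R + 12) ^ 2) * 2 ^ n * (n + 1) / n.factorial := by
          rw [div_le_div_iff₀ hfpos hfpos]
          have hKE : (0:ℝ) ≤ K * Real.exp ((5*R+12)^2) := by positivity
          nlinarith [mul_nonneg hKE hfpos.le]
  · -- large n
    push_neg at hn
    set m : ℕ := n - N with hmdef
    have hnm : N + m = n := Nat.add_sub_cancel' hn
    have hray : ∀ k : ℕ, N ≤ k → (k : ℝ) ≤ 2 * ‖(z + k)‖ := by
      intro k hk
      have hk2 : 2*R + 2 ≤ (k:ℝ) := le_trans hNge (by exact_mod_cast hk)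
      have hlb : (k:ℝ) - R ≤ ‖(z + k)‖ := by
        have h8 : ‖((z + k) + (-z))‖ ≤ ‖(z + k)‖ + ‖z‖ := by
          simpa using norm_add_le (z + k) (-z)
        rw [show (z + (k:ℂ)) + (-z) = (k:ℂ) by ring, Complex.norm_natCast] at h8
        linarith
      linarith
    have hstep := inv_Gamma_step z N hN1 hray m
    have hprodeq : (∏ j ∈ Finset.range m, (((N + j : ℕ) : ℝ) / 2)) =
        (∏ j ∈ Finset.range m, ((N + j : ℕ) : ℝ)) / 2^m := by
      rw [Finset.prod_div_distrib, Finset.prod_const, Finset.card_range]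
    set Pr : ℝ := ∏ j ∈ Finset.range m, ((N + j : ℕ) : ℝ) with hPrdef
    have hPrpos : 0 < Pr := Finset.prod_pos (fun j _ => by
      have h0 : 0 < N + j := by omega
      exact_mod_cast h0)
    have hfid := fact_prod_id N hN1 m
    have hcastn : ((N + m : ℕ) : ℂ) = (n : ℂ) := by rw [hnm]
    rw [hprodeq, hcastn] at hstep
    have hC := hsmall N (le_refl _)
    have hq : 0 < Pr / 2^m := div_pos hPrpos (by positivity)
    rw [← le_div_iff₀ hq] at hstep
    have hG : ‖(Complex.Gamma (z + (n:ℂ)))⁻¹‖ ≤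
        (K * Real.exp ((3*R + 8)^2)) * 2^m / Pr := by
      refine hstep.trans ?_
      rw [div_div_eq_mul_div, div_le_div_iff₀ hPrpos hPrpos]
      exact mul_le_mul_of_nonneg_right (mul_le_mul_of_nonneg_right hC (by positivity)) hPrpos.le
    have hfid2 : (n.factorial : ℝ) = ((N-1).factorial : ℝ) * (n:ℝ) * Pr := by
      rw [← hnm]
      linarith [hfid]
    have hF1 : ((N-1).factorial : ℝ) ≤ Real.exp ((2*R+2)^2) := by
      apply hfact
      have h9 : ((N-1:ℕ):ℝ) ≤ (N:ℝ) - 1 := by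
        rw [Nat.cast_sub hN1]
        simp
      linarith
    have hfpos : (0:ℝ) < (n.factorial : ℝ) := by exact_mod_cast Nat.factorial_pos n
    have hmain : (K * Real.exp ((3*R + 8)^2) * ((N-1).factorial:ℝ)) * (2^m * (n:ℝ)) ≤
        (K * Real.exp ((5*R+12)^2)) * (2^n * ((n:ℝ)+1)) := by
      apply mul_le_mul
      · calc K * Real.exp ((3*R + 8)^2) * ((N-1).factorial:ℝ)
            ≤ K * Real.exp ((3*R + 8)^2) * Real.exp ((2*R+2)^2) := by
              apply mul_le_mul_of_nonneg_left hF1 (by positivity)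
          _ = K * (Real.exp ((3*R + 8)^2) * Real.exp ((2*R+2)^2)) := by ring
          _ ≤ _ := mul_le_mul_of_nonneg_left hexp (by linarith)
      · apply mul_le_mul
        · exact pow_le_pow_right₀ (by norm_num) (by omega)
        · linarith
        · positivity
        · positivity
      · positivity
      · positivity
    refine hG.trans ?_
    rw [div_le_div_iff₀ hPrpos hfpos]
    calc K * Real.exp ((3*R + 8)^2) * 2^m * (n.factorial : ℝ)
        = (K * Real.exp ((3*R + 8)^2) * ((N-1).factorial:ℝ)) * (2^m * (n:ℝ)) * Pr := by
          rw [hfid2]; ring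
      _ ≤ (K * Real.exp ((5*R+12)^2)) * (2^n * ((n:ℝ)+1)) * Pr := by
          apply mul_le_mul_of_nonneg_right hmain hPrpos.le
      _ = K * Real.exp ((5 * R + 12) ^ 2) * 2 ^ n * ((n:ℝ) + 1) * Pr := by ring

lemma my_div_mono {x y : ℝ} (c : ℝ) (h : x ≤ y) (hc : 0 ≤ c) : x / c ≤ y / c := by
  rcases eq_or_lt_of_le hc with h0 | h0
  · simp [← h0]
  · exact (div_le_div_iff₀ h0 h0).2 (by nlinarith)

lemma coeff_bound (γ η : ℝ) (hγ : 0 < γ) (hη : 0 < η) (n : ℕ) :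
    ‖(risingC (γ:ℂ) n * (-(η:ℂ))^n / (Nat.factorial n : ℂ))‖ ≤ (max 1 γ * η)^n := by
  have h1 : ‖(risingC (γ:ℂ) n)‖ = ∏ i ∈ Finset.range n, (γ + i) := by
    rw [risingC, norm_prod]
    apply Finset.prod_congr rfl
    intro i _
    rw [show (γ:ℂ) + i = ((γ + i : ℝ) : ℂ) by push_cast; ring, Complex.norm_real, Real.norm_eq_abs]
    apply _root_.abs_of_pos
    have : (0:ℝ) ≤ i := Nat.cast_nonneg i
    linarith
  rw [norm_div, norm_mul, norm_pow, h1, norm_neg, Complex.norm_real, Real.norm_eq_abs,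
    _root_.abs_of_pos hη, Complex.norm_natCast]
  rw [← Finset.prod_range_add_one_eq_factorial]
  push_cast
  rw [show (η:ℝ)^n = ∏ _i ∈ Finset.range n, η by rw [Finset.prod_const, Finset.card_range],
    show (max 1 γ * η)^n = ∏ _i ∈ Finset.range n, (max 1 γ * η) by
      rw [Finset.prod_const, Finset.card_range],
    ← Finset.prod_mul_distrib, ← Finset.prod_div_distrib]
  apply Finset.prod_le_prod
  · intro i _
    have : (0:ℝ) ≤ i := Nat.cast_nonneg i
    positivity
  · intro i _
    have hi : (0:ℝ) ≤ i := Nat.cast_nonneg i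
    rw [div_le_iff₀ (by linarith)]
    have hm1 : (1:ℝ) ≤ max 1 γ := le_max_left _ _
    have hm2 : γ ≤ max 1 γ := le_max_right _ _
    nlinarith [mul_nonneg (sub_nonneg.2 hm2) hη.le,
      mul_nonneg (mul_nonneg (sub_nonneg.2 hm1) hi) hη.le]

/-- for `γ, η > 0` (and `c ∈ (0,1)`), the function
`F^{planch}(z) = ₁F₁(γ;z;-η)/Γ(z) = (1/Γ(z)) ∑ₙ (γ^{↑n}/z^{↑n})(-η)ⁿ/n!`
extends to an entire function of finite order: there are `A, r > 0` with
`|F^{planch}(z)| ≤ exp(|z|^A)` for all `|z| > r`. -/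
theorem stmt18 (γ η c : ℝ) (hγ : 0 < γ) (hη : 0 < η)
    (hc : 0 < c) (hc1 : c < 1) :
    ∃ F : ℂ → ℂ,
      (∀ z : ℂ, AnalyticAt ℂ F z) ∧
      (∀ z : ℂ, (∀ n : ℕ, z ≠ -(n : ℂ)) →
        F z = (Complex.Gamma z)⁻¹ *
          ∑' n : ℕ, risingC (γ : ℂ) n / risingC z n * (-(η : ℂ)) ^ n
            / (Nat.factorial n : ℂ)) ∧
      ∃ A r : ℝ, 0 < A ∧ 0 < r ∧
        ∀ z : ℂ, r < ‖z‖ →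
          ‖F z‖ ≤ Real.exp (‖z‖ ^ A) := by
  obtain ⟨K, hK1, hK⟩ := inv_Gamma_shift_bound
  have hK0 : (0:ℝ) < K := lt_of_lt_of_le one_pos hK1
  set B : ℝ := max 1 γ * η with hBdef
  have hB0 : 0 < B := mul_pos (lt_of_lt_of_le one_pos (le_max_left 1 γ)) hη
  set a : ℕ → ℂ := fun n => risingC (γ:ℂ) n * (-(η:ℂ))^n / (Nat.factorial n : ℂ) with hadef
  have ha : ∀ n, ‖(a n)‖ ≤ B^n := fun n => coeff_bound γ η hγ hη n
  set F : ℂ → ℂ := fun z => ∑' n : ℕ, a n * (Complex.Gamma (z + n))⁻¹ with hFdef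
  have hbound : ∀ (z : ℂ) (n : ℕ), ‖(a n * (Complex.Gamma (z + n))⁻¹)‖ ≤
      K * Real.exp ((5 * ‖z‖ + 12)^2) * (4*B)^n / (Nat.factorial n : ℝ) := by
    intro z n
    have hfpos : (0:ℝ) < (Nat.factorial n : ℝ) := by exact_mod_cast Nat.factorial_pos n
    have hEpos : (0:ℝ) < Real.exp ((5 * ‖z‖ + 12)^2) := Real.exp_pos _
    have hn2 : ((n:ℝ)+1) ≤ 2^n := by exact_mod_cast Nat.lt_two_pow_self (n := n)
    have hD : (0:ℝ) ≤ K * Real.exp ((5 * ‖z‖ + 12)^2) * B^n * 2^n := by positivity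
    have hnum : B^n * (K * Real.exp ((5 * ‖z‖ + 12)^2) * 2^n * ((n:ℝ)+1)) ≤
        K * Real.exp ((5 * ‖z‖ + 12)^2) * (4*B)^n := by
      have h4B : (4*B)^n = B^n * 2^n * 2^n := by
        rw [show (4:ℝ)*B = B*2*2 by ring, mul_pow, mul_pow]
      rw [h4B]
      nlinarith [mul_le_mul_of_nonneg_left hn2 hD]
    calc ‖(a n * (Complex.Gamma (z + n))⁻¹)‖
        = ‖(a n)‖ * ‖(Complex.Gamma (z + n))⁻¹‖ := norm_mul _ _
      _ ≤ B^n * (K * Real.exp ((5 * ‖z‖ + 12)^2) * 2^n * ((n:ℝ)+1) / (Nat.factorial n : ℝ)) := by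
          apply mul_le_mul (ha n) (hK z n) (norm_nonneg _) (pow_nonneg hB0.le n)
      _ = B^n * (K * Real.exp ((5 * ‖z‖ + 12)^2) * 2^n * ((n:ℝ)+1)) / (Nat.factorial n : ℝ) := by
          ring
      _ ≤ _ := my_div_mono _ hnum hfpos.le
  have hu : ∀ C : ℝ, Summable (fun n : ℕ => C * (4*B)^n / (Nat.factorial n : ℝ)) := by
    intro C
    have := (Real.summable_pow_div_factorial (4*B)).mul_left C
    simpa [mul_div_assoc] using this
  refine ⟨F, ?_, ?_, ?_⟩
  · -- analyticity
    intro z₀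
    set R : ℝ := ‖z₀‖ + 1 with hRdef
    have hdiff : DifferentiableOn ℂ F (Metric.ball (0:ℂ) R) := by
      apply differentiableOn_tsum_of_summable_norm
        (u := fun n => K * Real.exp ((5 * R + 12)^2) * (4*B)^n / (Nat.factorial n : ℝ))
        (hu _)
      · intro n
        apply Differentiable.differentiableOn
        exact (Complex.differentiable_one_div_Gamma.comp
          (differentiable_id.add_const ((n:ℂ)))).const_mul _
      · exact Metric.isOpen_ball
      · intro n w hw
        refine (hbound w n).trans ?_
        apply my_div_mono _ _ (by positivity)
        have hw' : ‖w‖ < R := by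
          rw [Metric.mem_ball, Complex.dist_eq, sub_zero] at hw
          exact hw
        have hle : (5 * ‖w‖ + 12)^2 ≤ (5 * R + 12)^2 := by
          nlinarith [norm_nonneg w]
        have := Real.exp_le_exp.2 hle
        have h4B : (0:ℝ) ≤ (4*B)^n := by positivity
        exact mul_le_mul_of_nonneg_right (mul_le_mul_of_nonneg_left this hK0.le) h4B
    apply hdiff.analyticAt
    apply Metric.isOpen_ball.mem_nhds
    rw [Metric.mem_ball, Complex.dist_eq, sub_zero]
    linarith [norm_nonneg z₀]
  · -- agreement with the series
    intro z hz
    have hzi : ∀ i : ℕ, z + i ≠ 0 := by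
      intro i h0
      exact hz i (eq_neg_of_add_eq_zero_left h0)
    have hΓz : Complex.Gamma z ≠ 0 := Complex.Gamma_ne_zero hz
    have hr : ∀ n, risingC z n ≠ 0 := by
      intro n
      rw [risingC]
      exact Finset.prod_ne_zero_iff.2 (fun i _ => hzi i)
    have hprod : ∀ n : ℕ, Complex.Gamma (z + n) = Complex.Gamma z * risingC z n := by
      intro n
      rw [risingC]
      exact Gamma_add_nat z n (fun j _ => hzi j)
    have hterm : ∀ n : ℕ, a n * (Complex.Gamma (z + n))⁻¹ =
        (Complex.Gamma z)⁻¹ * (risingC (γ : ℂ) n / risingC z n * (-(η : ℂ)) ^ n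
          / (Nat.factorial n : ℂ)) := by
      intro n
      simp only [hadef]
      rw [hprod n, mul_inv]
      ring
    calc F z = ∑' n : ℕ, (Complex.Gamma z)⁻¹ * (risingC (γ : ℂ) n / risingC z n * (-(η : ℂ)) ^ n
          / (Nat.factorial n : ℂ)) := tsum_congr hterm
      _ = _ := tsum_mul_left
  · -- growth bound
    refine ⟨3, Real.log K + 4*B + 37, by norm_num, ?_, ?_⟩
    · have := Real.log_nonneg hK1
      linarith
    · intro z hrz
      set t : ℝ := ‖z‖ with htdef
      have ht0 : 0 ≤ t := norm_nonneg z
      have hlogK := Real.log_nonneg hK1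
      have hs : Summable (fun n : ℕ => ‖a n * (Complex.Gamma (z + n))⁻¹‖) := by
        refine Summable.of_nonneg_of_le
          (f := fun n => K * Real.exp ((5 * t + 12)^2) * (4*B)^n / (Nat.factorial n : ℝ))
          (fun n => norm_nonneg _) ?_ ?_
        · intro n
          exact hbound z n
        · exact hu _
      have hFle : ‖(F z)‖ ≤ ∑' n : ℕ,
          (K * Real.exp ((5 * t + 12)^2)) * (4*B)^n / (Nat.factorial n : ℝ) := by
        rw [hFdef]
        refine (norm_tsum_le_tsum_norm hs).trans ?_
        apply Summable.tsum_le_tsum _ hs (hu _)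
        intro n
        exact hbound z n
      have hsum : (∑' n : ℕ, (K * Real.exp ((5 * t + 12)^2)) * (4*B)^n / (Nat.factorial n : ℝ)) =
          K * Real.exp ((5 * t + 12)^2) * Real.exp (4*B) := by
        have h1 : (∑' n : ℕ, (4*B)^n / (Nat.factorial n : ℝ)) = Real.exp (4*B) := by
          rw [Real.exp_eq_exp_ℝ, NormedSpace.exp_eq_tsum_div]
        rw [← h1, ← tsum_mul_left]
        apply tsum_congr
        intro n
        ring
      rw [hsum] at hFle
      refine hFle.trans ?_
      have hrw : ‖z‖ ^ (3:ℝ) = t^(3:ℕ) := by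
        rw [← htdef, show (3:ℝ) = ((3:ℕ):ℝ) by norm_num, Real.rpow_natCast]
      rw [hrw]
      have hKexp : K = Real.exp (Real.log K) := (Real.exp_log hK0).symm
      rw [hKexp, ← Real.exp_add, ← Real.exp_add]
      apply Real.exp_le_exp.2
      have ht37 : 37 ≤ t := by linarith
      have htc : Real.log K + 4*B ≤ t := by linarith
      nlinarith [mul_nonneg (by linarith : (0:ℝ) ≤ t - 37) (mul_self_nonneg t), sq_nonneg t,
        mul_nonneg ht0 ht0]
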